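/- Let G = (X, W) be a monotone simple game on a finite set X with |X| = n. For each bijection σ : {1,…,n} → X, let Q_σ(G) be the least k ∈ {1,…,n} such that {σ(1),…,σ(k)} is a winning coalition, and Q_σ(G) = n+1 if no such k exists. Let Q̄(G) be the average of Q_σ(G) over all n! bijections σ. Then Q̄(G) = n + 1 − Σ_{k=0}^{n} |W_k| / C(n,k), where W_k is the set of winning coalitions of size k. -/

import Mathlib

/-- The set of the first `k` players queried, according to the ordering `σ`. -/
def initSeg {n : ℕ} {X : Type*} [DecidableEq X] (σ : Fin n ≃ X) (k : ℕ) : Finset X :=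
  (Finset.univ.filter fun j : Fin n => (j : ℕ) < k).image σ

section
variable {n : ℕ} {X : Type*} [DecidableEq X]

lemma initSeg_mono (σ : Fin n ≃ X) {k l : ℕ} (h : k ≤ l) : initSeg σ k ⊆ initSeg σ l := by
  apply Finset.image_subset_image
  intro j hj
  simp only [Finset.mem_filter, Finset.mem_univ, true_and] at *
  exact lt_of_lt_of_le hj h

lemma initSeg_of_le (σ : Fin n ≃ X) {k : ℕ} (h : n ≤ k) : initSeg σ k = initSeg σ n := by
  unfold initSeg
  congr 1
  apply Finset.filter_congr
  intro j _
  constructor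
  · intro _; exact j.isLt
  · intro _; exact lt_of_lt_of_le j.isLt h

lemma card_initSeg (σ : Fin n ≃ X) {k : ℕ} (h : k ≤ n) : (initSeg σ k).card = k := by
  rw [initSeg, Finset.card_image_of_injective _ σ.injective]
  have : (Finset.univ.filter fun j : Fin n => (j : ℕ) < k) =
      (Finset.range k).attachFin (fun m hm => lt_of_lt_of_le (Finset.mem_range.mp hm) h) := by
    ext j
    simp [Finset.mem_attachFin]
  rw [this, Finset.card_attachFin, Finset.card_range]
end

open Classical in
/-- The number of queries needed to find a winning coalition under the ordering `σ`:
the least `k` such that the first `k` players queried form a winning coalition, and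
`n + 1` if no such `k` exists. -/
noncomputable def Qval {n : ℕ} {X : Type*} [DecidableEq X] (W : Finset (Finset X))
    (σ : Fin n ≃ X) : ℕ :=
  if h : ∃ k, initSeg σ k ∈ W then Nat.find h else n + 1

section
variable {n : ℕ} {X : Type*} [DecidableEq X]
open Classical in
lemma Qval_eq (W : Finset (Finset X))
    (hmono : ∀ A B : Finset X, A ∈ W → A ⊆ B → B ∈ W) (σ : Fin n ≃ X) :
    Qval W σ = ((Finset.range (n+1)).filter fun k => initSeg σ k ∉ W).card := by
  unfold Qval
  split_ifs with h
  · set m := Nat.find h with hm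
    have hmW : initSeg σ m ∈ W := Nat.find_spec h
    have hmn : m ≤ n := by
      by_contra hc
      push_neg at hc
      have : initSeg σ n ∈ W := by rwa [← initSeg_of_le σ (le_of_lt hc)]
      exact absurd this (Nat.find_min h hc)
    have : ((Finset.range (n+1)).filter fun k => initSeg σ k ∉ W) = Finset.range m := by
      ext k
      simp only [Finset.mem_filter, Finset.mem_range]
      constructor
      · rintro ⟨hk1, hk2⟩
        by_contra hc
        push_neg at hc
        exact hk2 (hmono _ _ hmW (initSeg_mono σ hc))
      · intro hk
        exact ⟨lt_of_lt_of_le hk (le_trans hmn (Nat.le_succ n)), Nat.find_min h hk⟩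
    rw [this, Finset.card_range]
  · push_neg at h
    have : ((Finset.range (n+1)).filter fun k => initSeg σ k ∉ W) = Finset.range (n+1) := by
      apply Finset.filter_true_of_mem
      intro k _
      exact h k
    rw [this, Finset.card_range]
end

section
variable {n : ℕ} {X : Type*} [Fintype X] [DecidableEq X]

/-- A permutation of `X` mapping `S` onto `T`, when they have equal card. -/
lemma exists_perm_image (S T : Finset X) (h : S.card = T.card) :
    ∃ π : Equiv.Perm X, S.image π = T := by
  have hc : Sᶜ.card = Tᶜ.card := by
    rw [Finset.card_compl, Finset.card_compl, h]
  let e : (S : Finset X) ≃ (T : Finset X) := Finset.equivOfCardEq h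
  let f0 : (Sᶜ : Finset X) ≃ (Tᶜ : Finset X) := Finset.equivOfCardEq hc
  let e' : {x // x ∈ S} ≃ {x // x ∈ T} := e
  let f : {x // ¬ x ∈ S} ≃ {x // ¬ x ∈ T} :=
    ((Equiv.subtypeEquivRight (fun x => (Finset.mem_compl).symm)).trans f0).trans
      (Equiv.subtypeEquivRight (fun x => Finset.mem_compl))
  refine ⟨Equiv.subtypeCongr e' f, ?_⟩
  apply Finset.eq_of_subset_of_card_le
  · intro y hy
    rw [Finset.mem_image] at hy
    obtain ⟨x, hx, rfl⟩ := hy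
    have : Equiv.subtypeCongr e' f x = (e' ⟨x, hx⟩ : X) := by
      simp [Equiv.subtypeCongr, hx]
    rw [this]
    exact (e' ⟨x, hx⟩).2
  · rw [Finset.card_image_of_injective _ (Equiv.injective _), h]
end

section
variable {n : ℕ} {X : Type*} [Fintype X] [DecidableEq X]

lemma initSeg_trans (σ : Fin n ≃ X) (π : Equiv.Perm X) (k : ℕ) :
    initSeg (σ.trans π) k = (initSeg σ k).image π := by
  unfold initSeg
  rw [Finset.image_image]
  rfl

lemma fiber_const {k : ℕ} {S T : Finset X} (hST : S.card = T.card) :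
    (Finset.univ.filter fun σ : Fin n ≃ X => initSeg σ k = S).card
      = (Finset.univ.filter fun σ : Fin n ≃ X => initSeg σ k = T).card := by
  obtain ⟨π, hπ⟩ := exists_perm_image S T hST
  have hπ' : T.image π.symm = S := by
    rw [← hπ, Finset.image_image]
    simp
  apply Finset.card_bij' (fun σ _ => σ.trans π) (fun τ _ => τ.trans π.symm)
  · intro σ _; ext j; simp
  · intro τ _; ext j; simp
  · intro σ hσ
    simp only [Finset.mem_filter, Finset.mem_univ, true_and] at *
    rw [initSeg_trans, hσ, hπ]
  · intro τ hτ
    simp only [Finset.mem_filter, Finset.mem_univ, true_and] at *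
    rw [initSeg_trans, hτ, hπ']

lemma fiber_card_mul (hn : Fintype.card X = n) {k : ℕ} (hk : k ≤ n) {S : Finset X}
    (hS : S.card = k) :
    (Finset.univ.filter fun σ : Fin n ≃ X => initSeg σ k = S).card * n.choose k
      = n.factorial := by
  have e : Fin n ≃ X := (Fintype.equivFinOfCardEq hn).symm
  have htotal : (Finset.univ : Finset (Fin n ≃ X)).card = n.factorial := by
    rw [Finset.card_univ, Fintype.card_equiv e, Fintype.card_fin]
  have hfib : (Finset.univ : Finset (Fin n ≃ X)).card
      = ∑ T ∈ Finset.powersetCard k Finset.univ,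
          (Finset.univ.filter fun σ : Fin n ≃ X => initSeg σ k = T).card := by
    apply Finset.card_eq_sum_card_fiberwise
    intro σ _
    rw [Finset.mem_coe, Finset.mem_powersetCard]
    exact ⟨Finset.subset_univ _, card_initSeg σ hk⟩
  have hconst : ∀ T ∈ Finset.powersetCard k (Finset.univ : Finset X),
      (Finset.univ.filter fun σ : Fin n ≃ X => initSeg σ k = T).card
        = (Finset.univ.filter fun σ : Fin n ≃ X => initSeg σ k = S).card := by
    intro T hT
    rw [Finset.mem_powersetCard] at hT
    exact fiber_const (hT.2.trans hS.symm)
  have hps : (Finset.powersetCard k (Finset.univ : Finset X)).card = n.choose k := by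
    rw [Finset.card_powersetCard, Finset.card_univ, hn]
  rw [Finset.sum_congr rfl hconst, Finset.sum_const, smul_eq_mul, hps] at hfib
  rw [mul_comm, ← hfib, htotal]
end

section
variable {n : ℕ} {X : Type*} [Fintype X] [DecidableEq X]

lemma win_count (hn : Fintype.card X = n) (W : Finset (Finset X)) {k : ℕ} (hk : k ≤ n) :
    (Finset.univ.filter fun σ : Fin n ≃ X => initSeg σ k ∈ W).card * n.choose k
      = (W.filter fun S => S.card = k).card * n.factorial := by
  have hfib : (Finset.univ.filter fun σ : Fin n ≃ X => initSeg σ k ∈ W).card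
      = ∑ S ∈ W.filter (fun S => S.card = k),
          ((Finset.univ.filter fun σ : Fin n ≃ X => initSeg σ k ∈ W).filter
            fun σ => initSeg σ k = S).card := by
    apply Finset.card_eq_sum_card_fiberwise
    intro σ hσ
    rw [Finset.mem_coe, Finset.mem_filter] at hσ ⊢
    exact ⟨hσ.2, card_initSeg σ hk⟩
  have hfib2 : ∀ S ∈ W.filter (fun S => S.card = k),
      ((Finset.univ.filter fun σ : Fin n ≃ X => initSeg σ k ∈ W).filter
        fun σ => initSeg σ k = S).card
      = (Finset.univ.filter fun σ : Fin n ≃ X => initSeg σ k = S).card := by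
    intro S hS
    rw [Finset.mem_filter] at hS
    congr 1
    rw [Finset.filter_filter]
    apply Finset.filter_congr
    intro σ _
    constructor
    · exact fun h => h.2
    · exact fun h => ⟨h ▸ hS.1, h⟩
  rw [hfib, Finset.sum_congr rfl hfib2, Finset.sum_mul]
  have : ∀ S ∈ W.filter (fun S => S.card = k),
      (Finset.univ.filter fun σ : Fin n ≃ X => initSeg σ k = S).card * n.choose k
        = n.factorial := by
    intro S hS
    rw [Finset.mem_filter] at hS
    exact fiber_card_mul hn hk hS.2
  rw [Finset.sum_congr rfl this, Finset.sum_const, smul_eq_mul]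
end

/-- For a monotone simple game `(X, W)` with `|X| = n`, the average of
`Q_σ` over all `n!` bijections `σ` equals `n + 1 - ∑_{k=0}^{n} |W_k| / C(n,k)`. -/
theorem statement1 {X : Type*} [Fintype X] [DecidableEq X] (n : ℕ)
    (hn : Fintype.card X = n) (W : Finset (Finset X)) (hW : ∅ ∉ W)
    (hmono : ∀ A B : Finset X, A ∈ W → A ⊆ B → B ∈ W) :
    (∑ σ : Fin n ≃ X, (Qval W σ : ℝ)) / (n.factorial : ℝ)
      = (n : ℝ) + 1 - ∑ k ∈ Finset.range (n + 1),
          ((W.filter fun S => S.card = k).card : ℝ) / (n.choose k : ℝ) := by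
  classical
  have hfact : (0 : ℝ) < (n.factorial : ℝ) := by exact_mod_cast n.factorial_pos
  -- rewrite the sum of Qval
  have h1 : ∀ σ : Fin n ≃ X, (Qval W σ : ℝ)
      = ∑ k ∈ Finset.range (n+1), if initSeg σ k ∈ W then 0 else 1 := by
    intro σ
    rw [Qval_eq W hmono σ]
    rw [Finset.card_filter]
    push_cast
    apply Finset.sum_congr rfl
    intro k _
    by_cases h : initSeg σ k ∈ W <;> simp [h]
  have h2 : (∑ σ : Fin n ≃ X, (Qval W σ : ℝ))
      = ∑ k ∈ Finset.range (n+1),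
          ((n.factorial : ℝ) - ((Finset.univ.filter
            fun σ : Fin n ≃ X => initSeg σ k ∈ W).card : ℝ)) := by
    rw [Finset.sum_congr rfl (fun σ _ => h1 σ), Finset.sum_comm]
    apply Finset.sum_congr rfl
    intro k _
    rw [Finset.sum_ite, Finset.sum_const, Finset.sum_const, nsmul_eq_mul, nsmul_eq_mul,
      mul_zero, mul_one, zero_add]
    have hcardu : ((Finset.univ : Finset (Fin n ≃ X)).card : ℝ) = (n.factorial : ℝ) := by
      have e : Fin n ≃ X := (Fintype.equivFinOfCardEq hn).symm
      rw [Finset.card_univ, Fintype.card_equiv e, Fintype.card_fin]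
    have := Finset.card_filter_add_card_filter_not
      (s := (Finset.univ : Finset (Fin n ≃ X))) (p := fun σ => initSeg σ k ∈ W)
    have h' : ((Finset.univ.filter fun σ : Fin n ≃ X => initSeg σ k ∈ W).card : ℝ)
        + ((Finset.univ.filter fun σ : Fin n ≃ X => ¬ initSeg σ k ∈ W).card : ℝ)
        = (n.factorial : ℝ) := by
      rw [← hcardu]; exact_mod_cast this
    linarith
  rw [h2, Finset.sum_div]
  have h3 : ∑ k ∈ Finset.range (n+1),
      ((n.factorial : ℝ) - ((Finset.univ.filter
        fun σ : Fin n ≃ X => initSeg σ k ∈ W).card : ℝ)) / (n.factorial : ℝ)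
      = ∑ k ∈ Finset.range (n+1), (1 - ((W.filter fun S => S.card = k).card : ℝ)
          / (n.choose k : ℝ)) := by
    apply Finset.sum_congr rfl
    intro k hk
    rw [Finset.mem_range] at hk
    have hk' : k ≤ n := Nat.lt_succ_iff.mp hk
    have hchoose : (0 : ℝ) < (n.choose k : ℝ) := by
      exact_mod_cast Nat.choose_pos hk'
    have hwc := win_count hn W (k := k) hk'
    have hwc' : ((Finset.univ.filter fun σ : Fin n ≃ X => initSeg σ k ∈ W).card : ℝ)
        * (n.choose k : ℝ) = ((W.filter fun S => S.card = k).card : ℝ) * (n.factorial : ℝ) := by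
      exact_mod_cast hwc
    field_simp
    linarith [hwc']
  rw [h3, Finset.sum_sub_distrib, Finset.sum_const, Finset.card_range, nsmul_eq_mul, mul_one]
  push_cast
  ring
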